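/- Reduction from three machines with unit first-machine processing times to two machines: let I be a two-machine JIT flow-shop instance with n jobs, where job j has processing times p^(1)_j, p^(2)_j, weight w_j, and due date d_j. Define the three-machine instance Ī on the same n jobs by p̄^(1)_j = 1, p̄^(2)_j = p^(1)_j, p̄^(3)_j = p^(2)_j, w̄_j = w_j, and d̄_j = d_j + 1. Then a set of jobs E is feasible for the three-machine instance Ī if and only if E is feasible for the two-machine instance I. -/

import Mathlib

open Finset

/-- A just-in-time flow-shop instance on `m` machines with jobs of type `J`:
`p i j` is the (positive integer) processing time of job `j` on machine `i`,
`d j` its positive integer due date and `w j` its positive integer weight. -/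
structure JITInstance (m : ℕ) (J : Type) where
  p : Fin m → J → ℕ
  d : J → ℕ
  w : J → ℕ
  p_pos : ∀ i j, 0 < p i j
  d_pos : ∀ j, 0 < d j
  w_pos : ∀ j, 0 < w j

/-- `S` is a JIT schedule of the job set `E`: on every machine the processing
intervals `(S i j, S i j + p i j]` of distinct jobs of `E` are pairwise disjoint,
each job's operation on machine `i+1` starts no earlier than its completion on
machine `i`, and every job of `E` completes on the last machine exactly at its
due date.  (Start times are nonnegative automatically, being naturals.) -/
def IsJITSchedule {m : ℕ} {J : Type} (I : JITInstance m J)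
    (E : Finset J) (S : Fin m → J → ℕ) : Prop :=
  (∀ i : Fin m, ∀ j ∈ E, ∀ j' ∈ E, j ≠ j' →
      S i j + I.p i j ≤ S i j' ∨ S i j' + I.p i j' ≤ S i j) ∧
  (∀ j ∈ E, ∀ i i' : Fin m, i'.val = i.val + 1 →
      S i j + I.p i j ≤ S i' j) ∧
  (∀ j ∈ E, ∀ i : Fin m, i.val = m - 1 →
      S i j + I.p i j = I.d j)

/-- A job set is feasible if it admits a JIT schedule. -/
def Feasible {m : ℕ} {J : Type} (I : JITInstance m J) (E : Finset J) : Prop :=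
  ∃ S : Fin m → J → ℕ, IsJITSchedule I E S

/-- The three-machine instance `Ī` obtained from a two-machine instance `I`:
`p̄¹ = 1`, `p̄² = p¹`, `p̄³ = p²`, `w̄ = w`, `d̄ = d + 1`. -/
def liftToThreeMachines {J : Type} (I : JITInstance 2 J) : JITInstance 3 J where
  p := fun i j =>
    if i.val = 0 then 1 else if i.val = 1 then I.p 0 j else I.p 1 j
  d := fun j => I.d j + 1
  w := I.w
  p_pos := by
    intro i j
    try dsimp only
    split
    · exact one_pos
    · split
      · exact I.p_pos 0 j
      · exact I.p_pos 1 j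
  d_pos := fun j => Nat.succ_pos (I.d j)
  w_pos := I.w_pos

/-- reduction from three machines with unit first-machine
processing times to two machines.  A job set `E` is feasible for the
three-machine instance `Ī` iff it is feasible for the two-machine instance `I`. -/
theorem jit_three_machines_unit_first_iff_two_machines {J : Type}
    (I : JITInstance 2 J) (E : Finset J) :
    Feasible (liftToThreeMachines I) E ↔ Feasible I E := by
  constructor
  · rintro ⟨S, h1, h2, h3⟩
    refine ⟨fun i j => if i.val = 0 then S 1 j - 1 else S 2 j - 1, ?_, ?_, ?_⟩
    · intro i j hj j' hj' hne
      have hs1 : S 0 j + 1 ≤ S 1 j := by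
        have := h2 j hj 0 1 rfl; simpa [liftToThreeMachines] using this
      have hs1' : S 0 j' + 1 ≤ S 1 j' := by
        have := h2 j' hj' 0 1 rfl; simpa [liftToThreeMachines] using this
      have hs2 : S 1 j + I.p 0 j ≤ S 2 j := by
        have := h2 j hj 1 2 rfl; simpa [liftToThreeMachines] using this
      have hs2' : S 1 j' + I.p 0 j' ≤ S 2 j' := by
        have := h2 j' hj' 1 2 rfl; simpa [liftToThreeMachines] using this
      fin_cases i
      · have := h1 1 j hj j' hj' hne
        simp [liftToThreeMachines] at this ⊢
        omega
      · have := h1 2 j hj j' hj' hne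
        simp [liftToThreeMachines] at this ⊢
        omega
    · intro j hj i i' hii
      have hs1 : S 0 j + 1 ≤ S 1 j := by
        have := h2 j hj 0 1 rfl; simpa [liftToThreeMachines] using this
      have hs2 : S 1 j + I.p 0 j ≤ S 2 j := by
        have := h2 j hj 1 2 rfl; simpa [liftToThreeMachines] using this
      fin_cases i <;> fin_cases i' <;> simp_all [Fin.ext_iff] <;> omega
    · intro j hj i hi
      have hs1 : S 0 j + 1 ≤ S 1 j := by
        have := h2 j hj 0 1 rfl; simpa [liftToThreeMachines] using this
      have hs2 : S 1 j + I.p 0 j ≤ S 2 j := by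
        have := h2 j hj 1 2 rfl; simpa [liftToThreeMachines] using this
      have hd : S 2 j + I.p 1 j = I.d j + 1 := by
        have := h3 j hj 2 rfl; simpa [liftToThreeMachines] using this
      fin_cases i <;> simp_all [Fin.ext_iff] <;> omega
  · rintro ⟨S, h1, h2, h3⟩
    refine ⟨fun i j => if i.val = 0 then S 0 j
      else if i.val = 1 then S 0 j + 1 else S 1 j + 1, ?_, ?_, ?_⟩
    · intro i j hj j' hj' hne
      have hp : 0 < I.p 0 j := I.p_pos 0 j
      have hp' : 0 < I.p 0 j' := I.p_pos 0 j'
      fin_cases i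
      · have := h1 0 j hj j' hj' hne
        simp [liftToThreeMachines] at this ⊢
        omega
      · have := h1 0 j hj j' hj' hne
        simp [liftToThreeMachines] at this ⊢
        omega
      · have := h1 1 j hj j' hj' hne
        simp [liftToThreeMachines] at this ⊢
        omega
    · intro j hj i i' hii
      have hs : S 0 j + I.p 0 j ≤ S 1 j := h2 j hj 0 1 rfl
      fin_cases i <;> fin_cases i' <;> simp [liftToThreeMachines] at hii ⊢ <;> omega
    · intro j hj i hi
      have hd : S 1 j + I.p 1 j = I.d j := h3 j hj 1 rfl
      fin_cases i <;> simp [liftToThreeMachines] at hi ⊢ <;> omega
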